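/- arXiv:1106.1666 — 4 statements merged into one kernel-verified Lean document; each statement's English description precedes it below -/
import Mathlib

section
/- For any multi-index α = (α_1,...,α_n) of nonnegative integers with |α| = α_1 + ... + α_n = 2d, the polynomial p(X) = Σ_{i=1}^n α_i X_i^{2d} − 2d·X_1^{α_1}···X_n^{α_n} is a sum of squares of binomials, i.e., a sum of squares of polynomials of the form a·X^β − b·X^γ. -/
open MvPolynomial

/-- The set of squares of binomials `a·X^β − b·X^γ` in `ℝ[X_1,…,X_n]`. -/
def binomSq (n : ℕ) : Set (MvPolynomial (Fin n) ℝ) :=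
  {q | ∃ (a b : ℝ) (β γ : Fin n →₀ ℕ),
    q = (monomial β a - monomial γ b) ^ 2}

/-- `p` is a sum of binomial squares. -/
def IsSOBS {n : ℕ} (p : MvPolynomial (Fin n) ℝ) : Prop :=
  p ∈ AddSubmonoid.closure (binomSq n)

namespace HRaux
variable {n : ℕ}

noncomputable def Fp (n d : ℕ) (α : Fin n →₀ ℕ) : MvPolynomial (Fin n) ℝ :=
  ∑ i, C ((α i : ℝ)) * X i ^ (2 * d) - C ((2 * d : ℕ) : ℝ) * monomial α (1 : ℝ)

def σ (z : Fin n →₀ ℕ) : ℕ := ∑ k, z k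

lemma sq_mem (a b : ℝ) (β γ : Fin n →₀ ℕ) :
    (monomial β a - monomial γ b) ^ 2 ∈ AddSubmonoid.closure (binomSq n) :=
  AddSubmonoid.subset_closure ⟨a, b, β, γ, rfl⟩

lemma cmul_mem {c : ℝ} (hc : 0 ≤ c) {p : MvPolynomial (Fin n) ℝ}
    (hp : p ∈ AddSubmonoid.closure (binomSq n)) :
    C c * p ∈ AddSubmonoid.closure (binomSq n) := by
  induction hp using AddSubmonoid.closure_induction with
  | mem q hq =>
      obtain ⟨a, b, β, γ, rfl⟩ := hq
      have : C c * (monomial β a - monomial γ b) ^ 2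
          = (monomial β (Real.sqrt c * a) - monomial γ (Real.sqrt c * b)) ^ 2 := by
        rw [← C_mul_monomial, ← C_mul_monomial, ← mul_sub, mul_pow, ← C_pow,
          Real.sq_sqrt hc]
      rw [this]
      exact sq_mem _ _ _ _
  | zero => simpa using AddSubmonoid.zero_mem _
  | add x y _ _ hx hy => rw [mul_add]; exact AddSubmonoid.add_mem _ hx hy

lemma half_mem {p : MvPolynomial (Fin n) ℝ}
    (hp : C (2:ℝ) * p ∈ AddSubmonoid.closure (binomSq n)) :
    p ∈ AddSubmonoid.closure (binomSq n) := by
  have h : p = C ((2:ℝ)⁻¹) * (C (2:ℝ) * p) := by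
    rw [← mul_assoc, ← map_mul]; norm_num
  rw [h]
  exact cmul_mem (by norm_num) hp

lemma qident (d : ℕ) (u v : Fin n →₀ ℕ) :
    C (2:ℝ) * Fp n d (u + v)
      = Fp n d (u + u) + Fp n d (v + v)
        + C ((2 * d : ℕ) : ℝ) * (monomial u (1:ℝ) - monomial v (1:ℝ)) ^ 2 := by
  have hm : ∀ w z : Fin n →₀ ℕ,
      (monomial w (1:ℝ)) * monomial z (1:ℝ) = monomial (w + z) 1 := by
    intro w z; rw [monomial_mul, one_mul]
  have hC2 : (C (2:ℝ) : MvPolynomial (Fin n) ℝ) = 2 := map_ofNat C 2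
  have hsq : (monomial u (1:ℝ) - monomial v (1:ℝ)) ^ 2
      = monomial (u + u) (1:ℝ) + monomial (v + v) 1
        - 2 * monomial (u + v) 1 := by
    rw [sub_sq, pow_two, pow_two, mul_assoc, hm, hm, hm]; ring
  simp only [Fp, Finsupp.add_apply, Nat.cast_add, map_add, hsq, hC2]
  simp only [add_mul, Finset.sum_add_distrib]
  ring

noncomputable def adj (z : Fin n →₀ ℕ) (i j : Fin n) : Fin n →₀ ℕ :=
  Finsupp.onFinset Finset.univ
    (fun k => if k = i then z i - z j else if k = j then 2 * z j else z k)
    (fun _ _ => Finset.mem_univ _)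

noncomputable def sib (z : Fin n →₀ ℕ) (i j : Fin n) : Fin n →₀ ℕ :=
  Finsupp.onFinset Finset.univ
    (fun k => if k = i then z i + z j else if k = j then 0 else z k)
    (fun _ _ => Finset.mem_univ _)

lemma adj_apply (z : Fin n →₀ ℕ) (i j k : Fin n) :
    adj z i j k = if k = i then z i - z j else if k = j then 2 * z j else z k := rfl

lemma sib_apply (z : Fin n →₀ ℕ) (i j k : Fin n) :
    sib z i j k = if k = i then z i + z j else if k = j then 0 else z k := rfl

lemma sum_split (i j : Fin n) (hij : i ≠ j) (f : Fin n → ℕ) :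
    ∑ k, f k = f i + f j + ∑ k ∈ Finset.univ \ {i, j}, f k := by
  have h : ({i, j} : Finset (Fin n)) ⊆ Finset.univ := Finset.subset_univ _
  rw [← Finset.sum_sdiff h, Finset.sum_pair hij]
  ring

lemma adj_add_sib (z : Fin n →₀ ℕ) (i j : Fin n) (hij : i ≠ j) (hle : z j ≤ z i) :
    adj z i j + sib z i j = z + z := by
  ext k
  simp only [Finsupp.add_apply, adj_apply, sib_apply]
  by_cases h1 : k = i
  · subst h1; rw [if_pos rfl, if_pos rfl]; omega
  · by_cases h2 : k = j
    · subst h2; rw [if_neg h1, if_neg h1, if_pos rfl, if_pos rfl]; omega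
    · rw [if_neg h1, if_neg h1, if_neg h2, if_neg h2]

lemma adj_i (z : Fin n →₀ ℕ) (i j : Fin n) : adj z i j i = z i - z j := by
  rw [adj_apply, if_pos rfl]

lemma adj_j (z : Fin n →₀ ℕ) (i j : Fin n) (hij : i ≠ j) : adj z i j j = 2 * z j := by
  rw [adj_apply, if_neg (fun h => hij h.symm), if_pos rfl]

lemma sib_i (z : Fin n →₀ ℕ) (i j : Fin n) : sib z i j i = z i + z j := by
  rw [sib_apply, if_pos rfl]

lemma sib_j (z : Fin n →₀ ℕ) (i j : Fin n) (hij : i ≠ j) : sib z i j j = 0 := by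
  rw [sib_apply, if_neg (fun h => hij h.symm), if_pos rfl]

lemma σ_adj (z : Fin n →₀ ℕ) (i j : Fin n) (hij : i ≠ j) (hle : z j ≤ z i) :
    σ (adj z i j) = σ z := by
  unfold σ
  rw [sum_split i j hij (fun k => adj z i j k), sum_split i j hij (fun k => z k)]
  have h1 : ∑ k ∈ Finset.univ \ {i, j}, adj z i j k
      = ∑ k ∈ Finset.univ \ {i, j}, z k := by
    apply Finset.sum_congr rfl
    intro k hk
    simp only [Finset.mem_sdiff, Finset.mem_insert, Finset.mem_singleton, not_or] at hk
    rw [adj_apply, if_neg hk.2.1, if_neg hk.2.2]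
  rw [h1, adj_i, adj_j z i j hij]
  omega

lemma σ_sib (z : Fin n →₀ ℕ) (i j : Fin n) (hij : i ≠ j) :
    σ (sib z i j) = σ z := by
  unfold σ
  rw [sum_split i j hij (fun k => sib z i j k), sum_split i j hij (fun k => z k)]
  have h1 : ∑ k ∈ Finset.univ \ {i, j}, sib z i j k
      = ∑ k ∈ Finset.univ \ {i, j}, z k := by
    apply Finset.sum_congr rfl
    intro k hk
    simp only [Finset.mem_sdiff, Finset.mem_insert, Finset.mem_singleton, not_or] at hk
    rw [sib_apply, if_neg hk.2.1, if_neg hk.2.2]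
  rw [h1, sib_i, sib_j z i j hij]
  omega

lemma adj_support (z : Fin n →₀ ℕ) (i j : Fin n) :
    (adj z i j).support ⊆ z.support := by
  intro k hk
  rw [Finsupp.mem_support_iff] at hk ⊢
  rw [adj_apply] at hk
  by_cases h1 : k = i
  · subst h1; rw [if_pos rfl] at hk; omega
  · by_cases h2 : k = j
    · subst h2; rw [if_neg h1, if_pos rfl] at hk; omega
    · rwa [if_neg h1, if_neg h2] at hk

lemma sib_support (z : Fin n →₀ ℕ) (i j : Fin n) (hij : i ≠ j) (hi : 0 < z i) :
    (sib z i j).support ⊆ z.support.erase j := by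
  intro k hk
  rw [Finsupp.mem_support_iff] at hk
  rw [Finset.mem_erase, Finsupp.mem_support_iff]
  rw [sib_apply] at hk
  by_cases h1 : k = i
  · subst h1; exact ⟨hij, by omega⟩
  · by_cases h2 : k = j
    · rw [if_neg h1, if_pos h2] at hk; omega
    · rw [if_neg h1, if_neg h2] at hk; exact ⟨h2, hk⟩

lemma vertex_zero (d : ℕ) (z : Fin n →₀ ℕ) (hcard : z.support.card ≤ 1)
    (hsum : σ z = d) : Fp n d (z + z) = 0 := by
  interval_cases h : z.support.card
  · have hz : z = 0 := by
      rwa [Finset.card_eq_zero, Finsupp.support_eq_empty] at h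
    subst hz
    have hd : d = 0 := by simpa [σ] using hsum.symm
    subst hd
    simp [Fp]
  · obtain ⟨i, b, hb, hz⟩ := Finsupp.card_support_eq_one'.mp h
    have hbd : b = d := by
      rw [← hsum, hz]
      simp [σ, Finsupp.single_apply]
    rw [hz, hbd]
    have hzz : (Finsupp.single i d + Finsupp.single i d) = Finsupp.single i (2 * d) := by
      rw [← Finsupp.single_add]; ring_nf
    rw [hzz]
    unfold Fp
    have hsum2 : ∑ k, C (((Finsupp.single i (2*d)) k : ℝ)) * X k ^ (2 * d)
        = C ((2*d : ℕ) : ℝ) * (X i : MvPolynomial (Fin n) ℝ) ^ (2 * d) := by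
      rw [Finset.sum_eq_single i]
      · simp [Finsupp.single_apply]
      · intro k _ hk
        simp [Finsupp.single_apply, Ne.symm hk]
      · intro hh; exact absurd (Finset.mem_univ i) hh
    rw [hsum2, ← X_pow_eq_monomial, sub_self]

lemma pair_exists (z : Fin n →₀ ℕ) (h : 2 ≤ z.support.card) :
    ∃ p : Fin n × Fin n, p.1 ≠ p.2 ∧ 0 < z p.1 ∧ 0 < z p.2 ∧ z p.2 ≤ z p.1 := by
  obtain ⟨a, ha, b, hb, hab⟩ :=
    Finset.one_lt_card.mp (show 1 < z.support.card by omega)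
  rw [Finsupp.mem_support_iff] at ha hb
  rcases le_total (z b) (z a) with hle | hle
  · exact ⟨(a, b), hab, Nat.pos_of_ne_zero ha, Nat.pos_of_ne_zero hb, hle⟩
  · exact ⟨(b, a), hab.symm, Nat.pos_of_ne_zero hb, Nat.pos_of_ne_zero ha, hle⟩

lemma apply_le_σ (z : Fin n →₀ ℕ) (k : Fin n) : z k ≤ σ z :=
  Finset.single_le_sum (f := fun k => z k) (fun _ _ => Nat.zero_le _) (Finset.mem_univ k)

noncomputable def nxt (z : Fin n →₀ ℕ) : Fin n →₀ ℕ :=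
  if h : 2 ≤ z.support.card then
    adj z (pair_exists z h).choose.1 (pair_exists z h).choose.2
  else z

lemma nxt_support (z : Fin n →₀ ℕ) : (nxt z).support ⊆ z.support := by
  unfold nxt
  split_ifs with h
  · exact adj_support _ _ _
  · exact subset_rfl

lemma σ_nxt (z : Fin n →₀ ℕ) : σ (nxt z) = σ z := by
  unfold nxt
  split_ifs with h
  · obtain ⟨hij, hi, hj, hle⟩ := (pair_exists z h).choose_spec
    exact σ_adj z _ _ hij hle
  · rfl

lemma key_step (d K : ℕ)
    (hIH : ∀ v : Fin n →₀ ℕ, v.support.card < K → σ v = d →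
      Fp n d (v + v) ∈ AddSubmonoid.closure (binomSq n))
    (z : Fin n →₀ ℕ) (hcard : z.support.card ≤ K) (hsum : σ z = d) :
    ∃ c ∈ AddSubmonoid.closure (binomSq n),
      C (2:ℝ) * Fp n d (z + z) = Fp n d (nxt z + nxt z) + c := by
  by_cases h : 2 ≤ z.support.card
  · obtain ⟨hij, hi, hj, hle⟩ := (pair_exists z h).choose_spec
    set i := (pair_exists z h).choose.1
    set j := (pair_exists z h).choose.2
    have hnxt : nxt z = adj z i j := by unfold nxt; rw [dif_pos h]
    have hjs : j ∈ z.support := Finsupp.mem_support_iff.mpr (by omega)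
    have hsibcard : (sib z i j).support.card < K := by
      have h1 := Finset.card_le_card (sib_support z i j hij hi)
      have h2 : (z.support.erase j).card < z.support.card :=
        Finset.card_erase_lt_of_mem hjs
      omega
    have hsibmem : Fp n d (sib z i j + sib z i j) ∈ AddSubmonoid.closure (binomSq n) :=
      hIH _ hsibcard (by rw [σ_sib z i j hij]; exact hsum)
    have hsqmem : C ((2 * d : ℕ) : ℝ) *
        (monomial (adj z i j) (1:ℝ) - monomial (sib z i j) (1:ℝ)) ^ 2
        ∈ AddSubmonoid.closure (binomSq n) :=
      cmul_mem (Nat.cast_nonneg _) (sq_mem _ _ _ _)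
    refine ⟨Fp n d (sib z i j + sib z i j) + C ((2 * d : ℕ) : ℝ) *
        (monomial (adj z i j) (1:ℝ) - monomial (sib z i j) (1:ℝ)) ^ 2,
      AddSubmonoid.add_mem _ hsibmem hsqmem, ?_⟩
    rw [hnxt]
    have := qident d (adj z i j) (sib z i j)
    rw [adj_add_sib z i j hij hle] at this
    rw [this]
    ring
  · have hz : Fp n d (z + z) = 0 := vertex_zero d z (by omega) hsum
    have hnxt : nxt z = z := by unfold nxt; rw [dif_neg h]
    exact ⟨0, AddSubmonoid.zero_mem _, by rw [hnxt, hz]; ring⟩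

lemma telescope (d K : ℕ)
    (hIH : ∀ v : Fin n →₀ ℕ, v.support.card < K → σ v = d →
      Fp n d (v + v) ∈ AddSubmonoid.closure (binomSq n)) :
    ∀ (s : ℕ) (z : Fin n →₀ ℕ), z.support.card ≤ K → σ z = d →
    ∃ c ∈ AddSubmonoid.closure (binomSq n),
      C ((2:ℝ)^s) * Fp n d (z + z) = Fp n d ((nxt^[s] z) + (nxt^[s] z)) + c := by
  intro s
  induction s with
  | zero =>
    intro z _ _
    exact ⟨0, AddSubmonoid.zero_mem _, by simp⟩
  | succ s ihs =>
    intro z hcard hsum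
    obtain ⟨c0, hc0, he0⟩ := key_step d K hIH z hcard hsum
    have hcard' : (nxt z).support.card ≤ K :=
      le_trans (Finset.card_le_card (nxt_support z)) hcard
    have hsum' : σ (nxt z) = d := by rw [σ_nxt]; exact hsum
    obtain ⟨c1, hc1, he1⟩ := ihs (nxt z) hcard' hsum'
    refine ⟨c1 + C ((2:ℝ)^s) * c0,
      AddSubmonoid.add_mem _ hc1 (cmul_mem (by positivity) hc0), ?_⟩
    rw [Function.iterate_succ_apply]
    have : C ((2:ℝ)^(s+1)) * Fp n d (z + z)
        = C ((2:ℝ)^s) * (C (2:ℝ) * Fp n d (z + z)) := by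
      rw [← mul_assoc, ← map_mul]; ring_nf
    rw [this, he0, mul_add, he1]
    ring

lemma good_all (d : ℕ) :
    ∀ K : ℕ, ∀ w : Fin n →₀ ℕ, w.support.card < K → σ w = d →
      Fp n d (w + w) ∈ AddSubmonoid.closure (binomSq n) := by
  intro K
  induction K with
  | zero => intro w hw; omega
  | succ K ih =>
    intro w hK hσ
    have hcard : w.support.card ≤ K := by omega
    -- invariants along the orbit
    have hiter : ∀ t : ℕ, (nxt^[t] w).support ⊆ w.support ∧ σ (nxt^[t] w) = d := by
      intro t
      induction t with
      | zero => exact ⟨subset_rfl, hσ⟩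
      | succ t iht =>
        rw [Function.iterate_succ_apply']
        exact ⟨(nxt_support _).trans iht.1, by rw [σ_nxt]; exact iht.2⟩
    -- pigeonhole : the orbit repeats
    obtain ⟨a, b, hab, heq⟩ : ∃ a b : ℕ, a < b ∧ nxt^[a] w = nxt^[b] w := by
      have hbound : ∀ t (k : Fin n), (nxt^[t] w) k < d + 1 := by
        intro t k
        have := apply_le_σ (nxt^[t] w) k
        rw [(hiter t).2] at this
        omega
      obtain ⟨x, y, hxy, hgxy⟩ := Finite.exists_ne_map_eq_of_infinite
        (fun (t : ℕ) (k : Fin n) => (⟨(nxt^[t] w) k, hbound t k⟩ : Fin (d+1)))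
      have hfe : nxt^[x] w = nxt^[y] w := by
        ext k
        have := congrFun hgxy k
        simpa using this
      rcases lt_or_gt_of_ne hxy with h | h
      · exact ⟨x, y, h, hfe⟩
      · exact ⟨y, x, h, hfe.symm⟩
    set y0 := nxt^[a] w with hy0
    have hy0supp : y0.support ⊆ w.support := (hiter a).1
    have hy0card : y0.support.card ≤ K := le_trans (Finset.card_le_card hy0supp) hcard
    have hy0sum : σ y0 = d := (hiter a).2
    have hcycle : nxt^[b - a] y0 = y0 := by
      rw [hy0, ← Function.iterate_add_apply, Nat.sub_add_cancel (le_of_lt hab), ← heq]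
    -- telescoping around the cycle
    obtain ⟨c, hc, hce⟩ := telescope d K ih (b - a) y0 hy0card hy0sum
    rw [hcycle] at hce
    have hp : 1 ≤ b - a := by omega
    have hr : (1:ℝ) < 2 ^ (b - a) := by
      calc (1:ℝ) < 2 ^ 1 := by norm_num
      _ ≤ 2 ^ (b - a) := by
        apply pow_le_pow_right₀ (by norm_num) hp
    have hcf : C ((2:ℝ) ^ (b - a) - 1) * Fp n d (y0 + y0) = c := by
      rw [map_sub, map_one, sub_mul, one_mul, hce]; ring
    have hgoody : Fp n d (y0 + y0) ∈ AddSubmonoid.closure (binomSq n) := by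
      have hne : ((2:ℝ) ^ (b - a) - 1) ≠ 0 := by linarith
      have : Fp n d (y0 + y0)
          = C (((2:ℝ) ^ (b - a) - 1)⁻¹) * (C ((2:ℝ) ^ (b - a) - 1) * Fp n d (y0 + y0)) := by
        rw [← mul_assoc, ← map_mul, inv_mul_cancel₀ hne, map_one, one_mul]
      rw [this, hcf]
      exact cmul_mem (le_of_lt (inv_pos.mpr (by linarith))) hc
    -- propagate backwards along the orbit
    have back : ∀ (s : ℕ) (z : Fin n →₀ ℕ), z.support ⊆ w.support → σ z = d →
        Fp n d ((nxt^[s] z) + (nxt^[s] z)) ∈ AddSubmonoid.closure (binomSq n) →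
        Fp n d (z + z) ∈ AddSubmonoid.closure (binomSq n) := by
      intro s
      induction s with
      | zero => intro z _ _ h; simpa using h
      | succ s ihs =>
        intro z hsupp hσz hgood
        have h1 : Fp n d (nxt z + nxt z) ∈ AddSubmonoid.closure (binomSq n) := by
          apply ihs (nxt z) ((nxt_support z).trans hsupp) (by rw [σ_nxt]; exact hσz)
          rwa [← Function.iterate_succ_apply]
        obtain ⟨c0, hc0, he⟩ := key_step d K ih z
          (le_trans (Finset.card_le_card hsupp) hcard) hσz
        have h2 : C (2:ℝ) * Fp n d (z + z) ∈ AddSubmonoid.closure (binomSq n) := by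
          rw [he]; exact AddSubmonoid.add_mem _ h1 hc0
        exact half_mem h2
    exact back a w subset_rfl hσ (hy0 ▸ hgoody)

lemma good_w (d : ℕ) (w : Fin n →₀ ℕ) (hσ : σ w = d) :
    Fp n d (w + w) ∈ AddSubmonoid.closure (binomSq n) :=
  good_all d (w.support.card + 1) w (Nat.lt_succ_self _) hσ

lemma exists_part (α : Fin n →₀ ℕ) (m : ℕ) (hm : m ≤ σ α) :
    ∃ u : Fin n →₀ ℕ, (∀ k, u k ≤ α k) ∧ σ u = m := by
  induction m with
  | zero => exact ⟨0, fun k => Nat.zero_le _, by simp [σ]⟩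
  | succ m ihm =>
    obtain ⟨u, hu, hσu⟩ := ihm (by omega)
    have hex : ∃ i, u i < α i := by
      by_contra hno
      push_neg at hno
      have : σ α ≤ σ u := Finset.sum_le_sum fun i _ => hno i
      omega
    obtain ⟨i, hi⟩ := hex
    refine ⟨u + Finsupp.single i 1, ?_, ?_⟩
    · intro k
      rw [Finsupp.add_apply, Finsupp.single_apply]
      by_cases hk : i = k
      · subst hk; rw [if_pos rfl]; omega
      · rw [if_neg hk]; simpa using hu k
    · unfold σ
      simp only [Finsupp.add_apply]
      rw [Finset.sum_add_distrib]
      have h1 : ∑ k, (Finsupp.single i 1 : Fin n →₀ ℕ) k = 1 := by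
        simp [Finsupp.single_apply]
      rw [h1]
      have h2 : ∑ k, u k = m := hσu
      omega

end HRaux

/-- Hurwitz–Reznick: for `|α| = 2d`, the form
`Σ α_i X_i^{2d} − 2d·X^α` is a sum of binomial squares. -/
theorem hurwitz_reznick {n d : ℕ} (α : Fin n →₀ ℕ) (hα : ∑ i, α i = 2 * d) :
    IsSOBS (∑ i, C ((α i : ℝ)) * X i ^ (2 * d)
      - C ((2 * d : ℕ) : ℝ) * monomial α (1 : ℝ)) := by
  show HRaux.Fp n d α ∈ AddSubmonoid.closure (binomSq n)
  have hσ : HRaux.σ α = 2 * d := hα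
  obtain ⟨u, hu, hσu⟩ := HRaux.exists_part α d (by omega)
  set v : Fin n →₀ ℕ := α - u with hv
  have huv : u + v = α := by
    ext k
    rw [Finsupp.add_apply, hv, Finsupp.tsub_apply]
    have := hu k
    omega
  have hσv : HRaux.σ v = d := by
    have h2 : HRaux.σ u + HRaux.σ v = HRaux.σ α := by
      unfold HRaux.σ
      rw [← Finset.sum_add_distrib]
      apply Finset.sum_congr rfl
      intro k _
      have h3 : (u + v) k = α k := by rw [huv]
      rw [Finsupp.add_apply] at h3
      omega
    omega
  have h1 := HRaux.good_w d u hσu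
  have h2 := HRaux.good_w d v hσv
  have hsq : C ((2 * d : ℕ) : ℝ) *
      (monomial u (1:ℝ) - monomial v (1:ℝ)) ^ 2 ∈ AddSubmonoid.closure (binomSq n) :=
    HRaux.cmul_mem (Nat.cast_nonneg _) (HRaux.sq_mem _ _ _ _)
  have hid := HRaux.qident d u v
  rw [huv] at hid
  apply HRaux.half_mem
  rw [hid]
  exact AddSubmonoid.add_mem _ (AddSubmonoid.add_mem _ h1 h2) hsq
end

section
/- Let p(X) = Σ_{i=1}^n β_i X_i^{2d} − μ·X^α where α ∈ ℕ^n, |α| = 2d, β_i ≥ 0 for all i, and μ ≥ 0 if all α_i are even. If μ^{2d}·Π_{i=1}^n α_i^{α_i} ≤ (2d)^{2d}·Π_{i=1}^n β_i^{α_i}, then p is a sum of squares in ℝ[X_1,...,X_n]. -/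
open MvPolynomial

section helpers
variable {R : Type*} [CommRing R]

lemma sos_mul_sq {a s : R} (hs : IsSumSq s) : IsSumSq (a * a * s) := by
  induction hs with
  | zero => simpa using IsSumSq.zero
  | @sq_add b t ht ih =>
    have : a * a * (b * b + t) = (a*b) * (a*b) + a * a * t := by ring
    rw [this]; exact IsSumSq.sq_add _ ih

lemma sos_sq (a : R) : IsSumSq (a * a) := by
  simpa using IsSumSq.sq_add a 0 IsSumSq.zero

end helpers

lemma sos_C_mul {σ : Type*} {c : ℝ} (hc : 0 ≤ c) {p : MvPolynomial σ ℝ}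
    (hp : IsSumSq p) : IsSumSq (C c * p) := by
  have h : (C c : MvPolynomial σ ℝ) = C (Real.sqrt c) * C (Real.sqrt c) := by
    rw [← C_mul, Real.mul_self_sqrt hc]
  rw [h]; exact sos_mul_sq hp

section cone
variable {R : Type*} [CommRing R] (a b : R)

def twoCone : AddSubmonoid R :=
  AddSubmonoid.closure {x | ∃ s t : ℕ, x = (a - b)^2 * (a^s * b^t)}

lemma gen_mem (s t : ℕ) : (a - b)^2 * (a^s * b^t) ∈ twoCone a b :=
  AddSubmonoid.subset_closure ⟨s, t, rfl⟩

lemma mul_a_mem {x : R} (hx : x ∈ twoCone a b) : a * x ∈ twoCone a b := by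
  induction hx using AddSubmonoid.closure_induction with
  | mem y hy =>
    obtain ⟨s, t, rfl⟩ := hy
    have : a * ((a - b)^2 * (a^s * b^t)) = (a - b)^2 * (a^(s+1) * b^t) := by ring
    rw [this]; exact gen_mem a b _ _
  | zero => simpa using (twoCone a b).zero_mem
  | add x y _ _ hx hy => rw [mul_add]; exact (twoCone a b).add_mem hx hy

lemma mul_b_mem {x : R} (hx : x ∈ twoCone a b) : b * x ∈ twoCone a b := by
  induction hx using AddSubmonoid.closure_induction with
  | mem y hy =>
    obtain ⟨s, t, rfl⟩ := hy
    have : b * ((a - b)^2 * (a^s * b^t)) = (a - b)^2 * (a^s * b^(t+1)) := by ring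
    rw [this]; exact gen_mem a b _ _
  | zero => simpa using (twoCone a b).zero_mem
  | add x y _ _ hx hy => rw [mul_add]; exact (twoCone a b).add_mem hx hy

lemma geom_mem (m : ℕ) : (a - b) * (a^m - b^m) ∈ twoCone a b := by
  induction m with
  | zero => simpa using (twoCone a b).zero_mem
  | succ m ih =>
    have : (a - b) * (a^(m+1) - b^(m+1))
        = b * ((a - b) * (a^m - b^m)) + (a - b)^2 * (a^m * b^0) := by ring
    rw [this]; exact (twoCone a b).add_mem (mul_b_mem a b ih) (gen_mem a b _ _)

lemma lemA_mem (m q : ℕ) :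
    a^(m+1) * (a^q - b^q) - (q : R) * (b^(m+q) * (a - b)) ∈ twoCone a b := by
  induction q with
  | zero => simpa using (twoCone a b).zero_mem
  | succ q ih =>
    have : a^(m+1) * (a^(q+1) - b^(q+1)) - ((q+1 : ℕ) : R) * (b^(m+(q+1)) * (a - b))
        = b * (a^(m+1) * (a^q - b^q) - (q : R) * (b^(m+q) * (a - b)))
          + (a - b) * (a^(m+1+q) - b^(m+1+q)) := by push_cast; ring
    rw [this]; exact (twoCone a b).add_mem (mul_b_mem a b ih) (geom_mem a b _)

lemma lemF_mem (q p : ℕ) :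
    (p : R) * a^(p+q) + (q : R) * b^(p+q) - ((p : R) + (q : R)) * (a^p * b^q)
      ∈ twoCone a b := by
  induction p with
  | zero => simpa using (twoCone a b).zero_mem
  | succ p ih =>
    have : ((p+1 : ℕ) : R) * a^((p+1)+q) + (q : R) * b^((p+1)+q)
          - (((p+1 : ℕ) : R) + (q : R)) * (a^(p+1) * b^q)
        = a * ((p : R) * a^(p+q) + (q : R) * b^(p+q) - ((p : R) + (q : R)) * (a^p * b^q))
          + (a^(p+1) * (a^q - b^q) - (q : R) * (b^(p+q) * (a - b))) := by push_cast; ring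
    rw [this]; exact (twoCone a b).add_mem (mul_a_mem a b ih) (lemA_mem a b p q)

end cone

lemma cone_sos {σ : Type*} (i k : σ) {x : MvPolynomial σ ℝ}
    (hx : x ∈ twoCone (X i ^ 2) (X k ^ 2)) : IsSumSq x := by
  induction hx using AddSubmonoid.closure_induction with
  | mem y hy =>
    obtain ⟨s, t, rfl⟩ := hy
    have : ((X i ^ 2 : MvPolynomial σ ℝ) - X k ^ 2)^2 * ((X i ^ 2)^s * (X k ^ 2)^t)
        = ((X i ^ 2 - X k ^ 2) * (X i ^ s * X k ^ t))
          * ((X i ^ 2 - X k ^ 2) * (X i ^ s * X k ^ t)) := by ring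
    rw [this]; exact sos_sq _
  | zero => simpa using IsSumSq.zero
  | add x y _ _ hx hy => exact IsSumSq.add hx hy

variable {n : ℕ}

noncomputable def QP (e : ℕ) (δ : Fin n →₀ ℕ) : MvPolynomial (Fin n) ℝ :=
  (∑ i, C ((δ i : ℝ)/(e : ℝ)) * X i ^ (2*e)) - monomial (δ + δ) 1

lemma QP_base1 (e : ℕ) (he : 1 ≤ e) (δ : Fin n →₀ ℕ) (i : Fin n)
    (hδ : ∀ j, j ≠ i → δ j = 0) (hsum : ∑ j, δ j = e) :
    IsSumSq (QP e δ) := by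
  have hδi : δ i = e := by
    have := Finset.sum_subset (Finset.subset_univ {i})
      (fun x _ hx => hδ x (by simpa using hx))
    rw [← hsum, ← this, Finset.sum_singleton]
  have h1 : (∑ j, C ((δ j : ℝ)/(e : ℝ)) * X j ^ (2*e) : MvPolynomial (Fin n) ℝ)
      = X i ^ (2*e) := by
    rw [← Finset.sum_subset (Finset.subset_univ {i})
      (fun x _ hx => by rw [hδ x (by simpa using hx)]; simp)]
    rw [Finset.sum_singleton, hδi]
    rw [div_self (by positivity), map_one, one_mul]
  have hsgl : δ + δ = Finsupp.single i (2*e) := by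
    ext j
    rcases eq_or_ne j i with rfl | hj
    · simp [hδi]; ring
    · simp [hδ j hj, Finsupp.single_apply, (Ne.symm hj)]
  rw [QP, h1, hsgl, ← X_pow_eq_monomial, sub_self]
  exact IsSumSq.zero

lemma QP_base2 (e : ℕ) (he : 1 ≤ e) (δ : Fin n →₀ ℕ) (i k : Fin n) (hik : i ≠ k)
    (hδ : ∀ j, j ≠ i → j ≠ k → δ j = 0) (hsum : ∑ j, δ j = e) :
    IsSumSq (QP e δ) := by
  set p := δ i with hp
  set q := δ k with hq
  have hpq : p + q = e := by
    have := Finset.sum_subset (Finset.subset_univ {i, k})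
      (fun x _ hx => by
        simp only [Finset.mem_insert, Finset.mem_singleton, not_or] at hx
        exact hδ x hx.1 hx.2)
    rw [← hsum, ← this, Finset.sum_pair hik]
  have hcast : ((p : ℝ) + q) = (e : ℝ) := by exact_mod_cast congrArg (Nat.cast (R := ℝ)) hpq
  have hene : (e : ℝ) ≠ 0 := by positivity
  have h1 : (∑ j, C ((δ j : ℝ)/(e : ℝ)) * X j ^ (2*e) : MvPolynomial (Fin n) ℝ)
      = C ((p : ℝ)/(e : ℝ)) * X i ^ (2*e) + C ((q : ℝ)/(e : ℝ)) * X k ^ (2*e) := by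
    rw [← Finset.sum_subset (Finset.subset_univ {i, k})
      (fun x _ hx => by
        simp only [Finset.mem_insert, Finset.mem_singleton, not_or] at hx
        rw [hδ x hx.1 hx.2]; simp)]
    rw [Finset.sum_pair hik]
  have h2 : (monomial (δ + δ) 1 : MvPolynomial (Fin n) ℝ)
      = (X i ^ 2)^p * (X k ^ 2)^q := by
    have hδeq : δ + δ = Finsupp.single i (2*p) + Finsupp.single k (2*q) := by
      ext j
      rcases eq_or_ne j i with rfl | hji
      · simp [Finsupp.single_apply, hik.symm, hik]; ring
      · rcases eq_or_ne j k with rfl | hjk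
        · simp [Finsupp.single_apply, hji, Ne.symm hji]; ring
        · simp [hδ j hji hjk, Finsupp.single_apply, Ne.symm hji, Ne.symm hjk]
    have hmono : (monomial (Finsupp.single i (2*p) + Finsupp.single k (2*q)) (1:ℝ))
        = monomial (Finsupp.single i (2*p)) (1:ℝ) * monomial (Finsupp.single k (2*q)) (1:ℝ) := by
      rw [monomial_mul, one_mul]
    rw [hδeq, hmono, ← X_pow_eq_monomial, ← X_pow_eq_monomial, pow_mul, pow_mul]
  have hmem := lemF_mem (X i ^ 2 : MvPolynomial (Fin n) ℝ) (X k ^ 2) q p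
  have hsos : IsSumSq (C ((e:ℝ))⁻¹ *
      ((p : MvPolynomial (Fin n) ℝ) * (X i ^ 2)^(p+q) + (q : MvPolynomial (Fin n) ℝ) * (X k ^ 2)^(p+q)
        - ((p : MvPolynomial (Fin n) ℝ) + (q : MvPolynomial (Fin n) ℝ)) * ((X i ^ 2)^p * (X k ^ 2)^q))) :=
    sos_C_mul (by positivity) (cone_sos i k hmem)
  have hfin : QP e δ = C ((e:ℝ))⁻¹ *
      ((p : MvPolynomial (Fin n) ℝ) * (X i ^ 2)^(p+q) + (q : MvPolynomial (Fin n) ℝ) * (X k ^ 2)^(p+q)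
        - ((p : MvPolynomial (Fin n) ℝ) + (q : MvPolynomial (Fin n) ℝ)) * ((X i ^ 2)^p * (X k ^ 2)^q)) := by
    have hC3 : (C ((e:ℝ))⁻¹ * (C ((p:ℝ)) + C ((q:ℝ))) : MvPolynomial (Fin n) ℝ) = 1 := by
      rw [← C_add, hcast, ← C_mul, inv_mul_cancel₀ hene, map_one]
    rw [QP, h1, h2, hpq,
      show ((p:ℕ) : MvPolynomial (Fin n) ℝ) = C ((p:ℝ)) from (map_natCast _ p).symm,
      show ((q:ℕ) : MvPolynomial (Fin n) ℝ) = C ((q:ℝ)) from (map_natCast _ q).symm,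
      show (C ((p:ℝ)/(e:ℝ)) : MvPolynomial (Fin n) ℝ) = C ((e:ℝ))⁻¹ * C ((p:ℝ)) by
        rw [← C_mul]; congr 1; field_simp,
      show (C ((q:ℝ)/(e:ℝ)) : MvPolynomial (Fin n) ℝ) = C ((e:ℝ))⁻¹ * C ((q:ℝ)) by
        rw [← C_mul]; congr 1; field_simp]
    linear_combination ((X i ^ 2)^p * (X k ^ 2)^q : MvPolynomial (Fin n) ℝ) * hC3
  rw [hfin]; exact hsos

lemma QP_move (e : ℕ) (δ δp δm : Fin n →₀ ℕ) (h : δp + δm = δ + δ) :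
    QP e δ = C ((2:ℝ))⁻¹ * ((monomial δp 1 - monomial δm 1) * (monomial δp 1 - monomial δm 1)
      + QP e δp + QP e δm) := by
  have hpt : ∀ j, δp j + δm j = 2 * δ j := by
    intro j
    have := DFunLike.congr_fun h j
    simp only [Finsupp.add_apply] at this
    omega
  have hPP : (monomial δp 1 * monomial δp 1 : MvPolynomial (Fin n) ℝ)
      = monomial (δp + δp) 1 := by rw [monomial_mul, one_mul]
  have hQQ : (monomial δm 1 * monomial δm 1 : MvPolynomial (Fin n) ℝ)
      = monomial (δm + δm) 1 := by rw [monomial_mul, one_mul]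
  have hPQ : (monomial δp 1 * monomial δm 1 : MvPolynomial (Fin n) ℝ)
      = monomial (δ + δ) 1 := by rw [monomial_mul, one_mul, h]
  have hS : ((∑ j, C ((δp j : ℝ)/(e:ℝ)) * X j ^ (2*e))
        + (∑ j, C ((δm j : ℝ)/(e:ℝ)) * X j ^ (2*e)) : MvPolynomial (Fin n) ℝ)
      = 2 * ∑ j, C ((δ j : ℝ)/(e:ℝ)) * X j ^ (2*e) := by
    rw [← Finset.sum_add_distrib, Finset.mul_sum]
    refine Finset.sum_congr rfl fun j _ => ?_
    have hco : ((δp j : ℝ))/(e:ℝ) + ((δm j : ℝ))/(e:ℝ) = 2 * (((δ j : ℝ))/(e:ℝ)) := by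
      rw [← add_div]
      have : ((δp j : ℝ)) + ((δm j : ℝ)) = 2 * ((δ j : ℝ)) := by exact_mod_cast hpt j
      rw [this]; ring
    rw [← add_mul, ← C_add, hco, C_mul, map_ofNat, mul_assoc]
  have hC2 : (C ((2:ℝ))⁻¹ * 2 : MvPolynomial (Fin n) ℝ) = 1 := by
    rw [show (2 : MvPolynomial (Fin n) ℝ) = C (2:ℝ) from (map_ofNat _ 2).symm,
      ← C_mul, inv_mul_cancel₀ two_ne_zero, map_one]
  simp only [QP]
  linear_combination (-(C ((2:ℝ))⁻¹ : MvPolynomial (Fin n) ℝ)) * (hPP + hQQ - 2 * hPQ + hS)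
    + ((monomial (δ + δ) 1 : MvPolynomial (Fin n) ℝ)
        - ∑ j, C ((δ j : ℝ)/(e:ℝ)) * X j ^ (2*e)) * hC2

lemma sum3 {l k m : Fin n} (hlk : l ≠ k) (hlm : l ≠ m) (hkm : k ≠ m) (g : Fin n → ℕ) :
    ∑ j, g j = g l + g k + g m + ∑ j ∈ ((Finset.univ.erase l).erase k).erase m, g j := by
  have h1 : k ∈ Finset.univ.erase l := Finset.mem_erase.2 ⟨hlk.symm, Finset.mem_univ k⟩
  have h2 : m ∈ (Finset.univ.erase l).erase k :=
    Finset.mem_erase.2 ⟨hkm.symm, Finset.mem_erase.2 ⟨hlm.symm, Finset.mem_univ m⟩⟩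
  rw [← Finset.add_sum_erase _ g (Finset.mem_univ l), ← Finset.add_sum_erase _ g h1,
    ← Finset.add_sum_erase _ g h2]
  ring

lemma QP_sos (e : ℕ) (he : 1 ≤ e) (N : ℕ) : ∀ (δ : Fin n →₀ ℕ),
    δ.support.card ≤ N → (∑ i, δ i = e) → IsSumSq (QP e δ) := by
  induction N with
  | zero =>
    intro δ hcard hsum
    have hδ0 : δ = 0 := by
      rwa [Nat.le_zero, Finset.card_eq_zero, Finsupp.support_eq_empty] at hcard
    subst hδ0
    simp only [Finsupp.coe_zero, Pi.zero_apply, Finset.sum_const_zero] at hsum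
    omega
  | succ N ih =>
    intro δ hcard hsum
    rcases Nat.lt_or_ge 2 δ.support.card with hbig | hsmall
    · -- inductive step : at least three support elements
      obtain ⟨u, v, w, hu, hv, hw, huv, huw, hvw⟩ := Finset.two_lt_card_iff.1 hbig
      -- sort them
      obtain ⟨l, k, m, hl, hk, hm, hlk, hlm, hkm, hdlk, hdkm⟩ :
          ∃ l k m, l ∈ δ.support ∧ k ∈ δ.support ∧ m ∈ δ.support ∧
            l ≠ k ∧ l ≠ m ∧ k ≠ m ∧ δ l ≤ δ k ∧ δ k ≤ δ m := by
        rcases le_total (δ u) (δ v) with h1 | h1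
        · rcases le_total (δ v) (δ w) with h2 | h2
          · exact ⟨u, v, w, hu, hv, hw, huv, huw, hvw, h1, h2⟩
          · rcases le_total (δ u) (δ w) with h3 | h3
            · exact ⟨u, w, v, hu, hw, hv, huw, huv, hvw.symm, h3, h2⟩
            · exact ⟨w, u, v, hw, hu, hv, huw.symm, hvw.symm, huv, h3, h1⟩
        · rcases le_total (δ u) (δ w) with h2 | h2
          · exact ⟨v, u, w, hv, hu, hw, huv.symm, hvw, huw, h1, h2⟩
          · rcases le_total (δ v) (δ w) with h3 | h3
            · exact ⟨v, w, u, hv, hw, hu, hvw, huv.symm, huw.symm, h3, h2⟩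
            · exact ⟨w, v, u, hw, hv, hu, hvw.symm, huw.symm, huv.symm, h3, h1⟩
      have hlpos : 1 ≤ δ l := Nat.one_le_iff_ne_zero.2 (Finsupp.mem_support_iff.1 hl)
      have hkpos : 1 ≤ δ k := Nat.one_le_iff_ne_zero.2 (Finsupp.mem_support_iff.1 hk)
      have hmpos : 1 ≤ δ m := Nat.one_le_iff_ne_zero.2 (Finsupp.mem_support_iff.1 hm)
      set fp : Fin n → ℕ := fun j =>
        if j = k then 0 else if j = l then 2 * δ l
          else if j = m then δ m + (δ k - δ l) else δ j with hfp
      set fm : Fin n → ℕ := fun j =>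
        if j = l then 0 else if j = k then 2 * δ k
          else if j = m then δ m - (δ k - δ l) else δ j with hfm
      set δp := Finsupp.equivFunOnFinite.symm fp with hδp
      set δm := Finsupp.equivFunOnFinite.symm fm with hδm
      have happ : ∀ j, δp j = fp j := fun j => rfl
      have happ' : ∀ j, δm j = fm j := fun j => rfl
      have hadd : δp + δm = δ + δ := by
        ext j
        simp only [Finsupp.add_apply, happ, happ', hfp, hfm]
        by_cases hjk : j = k
        · simp [hjk, hlk.symm, hkm]; omega
        · by_cases hjl : j = l
          · simp [hjl, hlk, hlm]; omega
          · by_cases hjm : j = m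
            · simp [hjm, hjk, hjl, (hkm.symm : m ≠ k), (hlm.symm : m ≠ l)]; omega
            · simp [hjk, hjl, hjm]
      have epl : δp l = 2 * δ l := by simp [happ, hfp, hlk, hlm]
      have epk : δp k = 0 := by simp [happ, hfp]
      have epm : δp m = δ m + (δ k - δ l) := by
        simp [happ, hfp, (hkm.symm : m ≠ k), (hlm.symm : m ≠ l)]
      have eml : δm l = 0 := by simp [happ', hfm]
      have emk : δm k = 2 * δ k := by simp [happ', hfm, hlk.symm]
      have emm : δm m = δ m - (δ k - δ l) := by
        simp [happ', hfm, (hkm.symm : m ≠ k), (hlm.symm : m ≠ l)]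
      have hrest : ∀ (γ : Fin n →₀ ℕ), (∀ j, j ≠ l → j ≠ k → j ≠ m → γ j = δ j) →
          ∑ j ∈ ((Finset.univ.erase l).erase k).erase m, γ j
            = ∑ j ∈ ((Finset.univ.erase l).erase k).erase m, δ j := by
        intro γ hγ
        refine Finset.sum_congr rfl fun j hj => ?_
        simp only [Finset.mem_erase] at hj
        exact hγ j hj.2.2.1 hj.2.1 hj.1
      have hoffp : ∀ j, j ≠ l → j ≠ k → j ≠ m → δp j = δ j := by
        intro j h1 h2 h3; simp [happ, hfp, h1, h2, h3]
      have hoffm : ∀ j, j ≠ l → j ≠ k → j ≠ m → δm j = δ j := by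
        intro j h1 h2 h3; simp [happ', hfm, h1, h2, h3]
      rw [sum3 hlk hlm hkm δ] at hsum
      have hsump : ∑ j, δp j = e := by
        rw [sum3 hlk hlm hkm (fun j => δp j), hrest _ hoffp, epl, epk, epm]; omega
      have hsumm : ∑ j, δm j = e := by
        rw [sum3 hlk hlm hkm (fun j => δm j), hrest _ hoffm, eml, emk, emm]; omega
      have hcardp : δp.support.card ≤ N := by
        have hsub : δp.support ⊆ δ.support.erase k := by
          intro j hj
          rw [Finsupp.mem_support_iff] at hj
          by_cases h2 : j = k
          · rw [h2] at hj; exact absurd epk hj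
          · refine Finset.mem_erase.2 ⟨h2, Finsupp.mem_support_iff.2 ?_⟩
            by_cases h1 : j = l
            · rw [h1] at hj ⊢; omega
            · by_cases h3 : j = m
              · rw [h3] at hj ⊢; omega
              · rwa [hoffp j h1 h2 h3] at hj
        have := (Finset.card_le_card hsub).trans_eq (Finset.card_erase_of_mem hk)
        omega
      have hcardm : δm.support.card ≤ N := by
        have hsub : δm.support ⊆ δ.support.erase l := by
          intro j hj
          rw [Finsupp.mem_support_iff] at hj
          by_cases h1 : j = l
          · rw [h1] at hj; exact absurd eml hj
          · refine Finset.mem_erase.2 ⟨h1, Finsupp.mem_support_iff.2 ?_⟩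
            by_cases h2 : j = k
            · rw [h2] at hj ⊢; omega
            · by_cases h3 : j = m
              · rw [h3] at hj ⊢; intro h0; rw [emm] at hj; omega
              · rwa [hoffm j h1 h2 h3] at hj
        have := (Finset.card_le_card hsub).trans_eq (Finset.card_erase_of_mem hl)
        omega
      rw [QP_move e δ δp δm hadd]
      refine sos_C_mul (by norm_num) ?_
      exact IsSumSq.add (IsSumSq.add (sos_sq _) (ih δp hcardp hsump)) (ih δm hcardm hsumm)
    · -- at most two support elements
      interval_cases h : δ.support.card
      · have hδ0 : δ = 0 := by
          rwa [Finset.card_eq_zero, Finsupp.support_eq_empty] at h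
        subst hδ0
        simp only [Finsupp.coe_zero, Pi.zero_apply, Finset.sum_const_zero] at hsum
        omega
      · obtain ⟨i, hi⟩ := Finset.card_eq_one.1 h
        refine QP_base1 e he δ i (fun j hj => ?_) hsum
        by_contra h0
        have := Finsupp.mem_support_iff.2 h0
        rw [hi, Finset.mem_singleton] at this
        exact hj this
      · obtain ⟨i, k, hik, hik2⟩ := Finset.card_eq_two.1 h
        refine QP_base2 e he δ i k hik (fun j hj1 hj2 => ?_) hsum
        by_contra h0
        have := Finsupp.mem_support_iff.2 h0
        rw [hik2] at this
        simp only [Finset.mem_insert, Finset.mem_singleton] at this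
        rcases this with rfl | rfl
        · exact hj1 rfl
        · exact hj2 rfl

lemma exists_half (α : Fin n →₀ ℕ) : ∀ k, k ≤ ∑ i, α i →
    ∃ γ : Fin n →₀ ℕ, (∀ i, γ i ≤ α i) ∧ ∑ i, γ i = k := by
  intro k
  induction k with
  | zero => exact fun _ => ⟨0, fun i => Nat.zero_le _, by simp⟩
  | succ k ih =>
    intro hk
    obtain ⟨γ, hle, hsum⟩ := ih (by omega)
    have : ∃ i, γ i < α i := by
      by_contra h
      push_neg at h
      have := Finset.sum_le_sum (fun i (_ : i ∈ Finset.univ) => h i)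
      omega
    obtain ⟨i, hi⟩ := this
    refine ⟨γ + Finsupp.single i 1, fun j => ?_, ?_⟩
    · rcases eq_or_ne i j with rfl | hij
      · simp [Finsupp.single_apply]; omega
      · have := hle j; simp [Finsupp.single_apply, hij]; omega
    · simp only [Finsupp.add_apply, Finset.sum_add_distrib, hsum]
      simp [Finsupp.single_apply]

lemma QA_sos (d : ℕ) (hd : 1 ≤ d) (α : Fin n →₀ ℕ) (hα : ∑ i, α i = 2*d) :
    IsSumSq ((∑ i, C ((α i : ℝ)/((2*d : ℕ) : ℝ)) * X i ^ (2*d)) - monomial α 1) := by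
  obtain ⟨γ, hle, hγsum⟩ := exists_half α d (by omega)
  set γ' : Fin n →₀ ℕ := α - γ with hγ'
  have hγ'app : ∀ j, γ' j = α j - γ j := fun j => Finsupp.tsub_apply α γ j
  have hadd : γ + γ' = α := by
    ext j; simp only [Finsupp.add_apply, hγ'app]; have := hle j; omega
  have hγ'sum : ∑ i, γ' i = d := by
    have h := congrArg (fun σ : Fin n →₀ ℕ => ∑ i, σ i) hadd
    simp only [Finsupp.add_apply, Finset.sum_add_distrib] at h
    omega
  -- the splitting identity
  have hPP : (monomial γ 1 * monomial γ 1 : MvPolynomial (Fin n) ℝ)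
      = monomial (γ + γ) 1 := by rw [monomial_mul, one_mul]
  have hQQ : (monomial γ' 1 * monomial γ' 1 : MvPolynomial (Fin n) ℝ)
      = monomial (γ' + γ') 1 := by rw [monomial_mul, one_mul]
  have hPQ : (monomial γ 1 * monomial γ' 1 : MvPolynomial (Fin n) ℝ)
      = monomial α 1 := by rw [monomial_mul, one_mul, hadd]
  have hS : ((∑ j, C ((γ j : ℝ)/(d:ℝ)) * X j ^ (2*d))
        + (∑ j, C ((γ' j : ℝ)/(d:ℝ)) * X j ^ (2*d)) : MvPolynomial (Fin n) ℝ)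
      = 2 * ∑ j, C ((α j : ℝ)/((2*d : ℕ) : ℝ)) * X j ^ (2*d) := by
    rw [← Finset.sum_add_distrib, Finset.mul_sum]
    refine Finset.sum_congr rfl fun j _ => ?_
    have hco : ((γ j : ℝ))/(d:ℝ) + ((γ' j : ℝ))/(d:ℝ) = 2 * (((α j : ℝ))/(((2*d : ℕ)) : ℝ)) := by
      have h1 : ((γ j : ℝ)) + ((γ' j : ℝ)) = ((α j : ℝ)) := by
        have := DFunLike.congr_fun hadd j
        simp only [Finsupp.add_apply] at this
        exact_mod_cast this
      have hdne : (d : ℝ) ≠ 0 := by positivity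
      rw [← add_div, h1]
      push_cast
      field_simp
    rw [← add_mul, ← C_add, hco, C_mul, map_ofNat, mul_assoc]
  have hC2 : (C ((2:ℝ))⁻¹ * 2 : MvPolynomial (Fin n) ℝ) = 1 := by
    rw [show (2 : MvPolynomial (Fin n) ℝ) = C (2:ℝ) from (map_ofNat _ 2).symm,
      ← C_mul, inv_mul_cancel₀ two_ne_zero, map_one]
  have hiden : ((∑ i, C ((α i : ℝ)/((2*d : ℕ) : ℝ)) * X i ^ (2*d)) - monomial α 1
        : MvPolynomial (Fin n) ℝ)
      = C ((2:ℝ))⁻¹ * ((monomial γ 1 - monomial γ' 1) * (monomial γ 1 - monomial γ' 1)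
        + QP d γ + QP d γ') := by
    simp only [QP]
    linear_combination (-(C ((2:ℝ))⁻¹ : MvPolynomial (Fin n) ℝ)) * (hPP + hQQ - 2 * hPQ + hS)
      + ((monomial α 1 : MvPolynomial (Fin n) ℝ)
          - ∑ j, C ((α j : ℝ)/(((2*d : ℕ)) : ℝ)) * X j ^ (2*d)) * hC2
  rw [hiden]
  refine sos_C_mul (by norm_num) ?_
  exact IsSumSq.add (IsSumSq.add (sos_sq _) (QP_sos d hd _ γ le_rfl hγsum))
    (QP_sos d hd _ γ' le_rfl hγ'sum)

lemma diag_sos (d : ℕ) (γ : Fin n → ℝ) (hγ : ∀ i, 0 ≤ γ i) :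
    IsSumSq (∑ i, C (γ i) * X i ^ (2*d) : MvPolynomial (Fin n) ℝ) := by
  refine Finset.sum_induction _ _ (fun a b => IsSumSq.add) IsSumSq.zero fun i _ => ?_
  have : (C (γ i) * X i ^ (2*d) : MvPolynomial (Fin n) ℝ)
      = (C (Real.sqrt (γ i)) * X i ^ d) * (C (Real.sqrt (γ i)) * X i ^ d) := by
    rw [mul_mul_mul_comm, ← C_mul, Real.mul_self_sqrt (hγ i), ← pow_add]
    congr 2
    omega
  rw [this]; exact sos_sq _

lemma sos_map' {R S F : Type*} [CommRing R] [CommRing S] [FunLike F R S]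
    [RingHomClass F R S] (f : F) {p : R} (hp : IsSumSq p) : IsSumSq (f p) := by
  induction hp with
  | zero => simpa using IsSumSq.zero
  | @sq_add a t ht ih => rw [map_add, map_mul]; exact IsSumSq.sq_add _ ih

lemma main_nonneg (d : ℕ) (hd : 1 ≤ d) (α : Fin n →₀ ℕ)
    (hα : ∑ i, α i = 2 * d) (β : Fin n → ℝ) (μ : ℝ)
    (hβ : ∀ i, 0 ≤ β i) (hμ0 : 0 ≤ μ)
    (hineq : μ ^ (2 * d) * ∏ i, (α i : ℝ) ^ (α i)
      ≤ ((2 * d : ℕ) : ℝ) ^ (2 * d) * ∏ i, (β i) ^ (α i)) :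
    IsSumSq (∑ i, C (β i) * X i ^ (2 * d) - C μ * monomial α (1 : ℝ)) := by
  have hP : (0:ℝ) < ∏ i, (α i : ℝ)^(α i) := by
    refine Finset.prod_pos fun i _ => ?_
    rcases Nat.eq_zero_or_pos (α i) with h | h
    · simp [h]
    · exact pow_pos (by exact_mod_cast h) _
  by_cases hzero : ∃ j, α j ≠ 0 ∧ β j = 0
  · obtain ⟨j, hj1, hj2⟩ := hzero
    have hprod0 : ∏ i, (β i)^(α i) = 0 :=
      Finset.prod_eq_zero (Finset.mem_univ j) (by rw [hj2]; exact zero_pow hj1)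
    have hpow0 : μ^(2*d) = 0 := by
      rw [hprod0, mul_zero] at hineq
      have h2 : 0 ≤ μ^(2*d) := pow_nonneg hμ0 _
      nlinarith
    have hμz : μ = 0 := pow_eq_zero_iff (n := 2*d) (by omega) |>.mp hpow0
    rw [hμz]; simp only [map_zero, zero_mul, sub_zero]
    exact diag_sos d β hβ
  · push_neg at hzero
    have hβpos : ∀ i, α i ≠ 0 → 0 < β i := fun i hi => (hβ i).lt_of_ne (Ne.symm (hzero i hi))
    have hdd : (2*d : ℕ) ≠ 0 := by omega
    have hddR : (((2*d : ℕ)) : ℝ) ≠ 0 := by positivity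
    set t : Fin n → ℝ := fun i =>
      if h : α i = 0 then 1 else ((((2*d : ℕ)) : ℝ) * β i / ((α i : ℕ) : ℝ)) ^ ((((2*d : ℕ)) : ℝ))⁻¹
      with ht
    have htpos : ∀ i, 0 < t i := by
      intro i
      simp only [ht]
      split_ifs with h
      · norm_num
      · refine Real.rpow_pos_of_pos ?_ _
        have h1 : 0 < ((α i : ℕ) : ℝ) := by
          have := Nat.pos_of_ne_zero h; exact_mod_cast this
        have h2 : 0 < (((2*d:ℕ)):ℝ) := by positivity
        exact div_pos (mul_pos h2 (hβpos i h)) h1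
    have htpow : ∀ i, α i ≠ 0 → (t i)^(2*d) = (((2*d:ℕ)):ℝ) * β i / ((α i : ℕ) : ℝ) := by
      intro i h
      simp only [ht, dif_neg h]
      refine Real.rpow_inv_natCast_pow ?_ hdd
      have h1 : 0 < ((α i : ℕ) : ℝ) := by
        have := Nat.pos_of_ne_zero h; exact_mod_cast this
      have h2 : (0:ℝ) ≤ (((2*d:ℕ)):ℝ) * β i := mul_nonneg (by positivity) (hβ i)
      exact div_nonneg h2 h1.le
    set c : ℝ := ∏ i, (t i)^(α i) with hc
    have hcpos : 0 < c := Finset.prod_pos fun i _ => pow_pos (htpos i) _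
    have hμc : μ ≤ c := by
      have hce : c^(2*d) * ∏ i, ((α i : ℕ) : ℝ)^(α i) = ∏ i, ((((2*d:ℕ)):ℝ) * β i)^(α i) := by
        rw [hc, ← Finset.prod_pow, ← Finset.prod_mul_distrib]
        refine Finset.prod_congr rfl fun i _ => ?_
        rcases eq_or_ne (α i) 0 with h | h
        · simp [h]
        · have h1 : ((α i : ℕ) : ℝ) ≠ 0 := by
            have := Nat.pos_of_ne_zero h
            positivity
          rw [pow_right_comm, htpow i h, ← mul_pow, div_mul_cancel₀ _ h1]
      have hrhs : ∀ B : ℝ, B^(2*d) * ∏ i, β i^(α i) = ∏ i, (B * β i)^(α i) := by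
        intro B
        rw [← hα, ← Finset.prod_pow_eq_pow_sum, ← Finset.prod_mul_distrib]
        exact Finset.prod_congr rfl fun i _ => (mul_pow _ _ _).symm
      have h1 : μ^(2*d) ≤ c^(2*d) := by
        have h2 := hineq
        rw [hrhs, ← hce] at h2
        exact le_of_mul_le_mul_right h2 hP
      exact le_of_pow_le_pow_left₀ (by omega) hcpos.le h1
    set φ : MvPolynomial (Fin n) ℝ →ₐ[ℝ] MvPolynomial (Fin n) ℝ :=
      aeval (fun i => C (t i) * X i) with hφ
    have hφdiag : ∀ (r:ℝ) (i : Fin n), φ (C r * X i ^ (2*d))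
        = C (r * (t i)^(2*d)) * X i^(2*d) := by
      intro r i
      rw [hφ, map_mul, map_pow, aeval_C, aeval_X, algebraMap_eq, mul_pow, ← C_pow,
        ← mul_assoc, ← C_mul]
    have hXprod : (monomial α (1:ℝ) : MvPolynomial (Fin n) ℝ) = ∏ i, (X i)^(α i) := by
      rw [monomial_eq, map_one, one_mul, Finsupp.prod_fintype _ _ (fun i => pow_zero _)]
    have hφmono : φ (monomial α (1:ℝ)) = C c * monomial α 1 := by
      rw [hφ, aeval_monomial, map_one, one_mul,
        Finsupp.prod_fintype _ _ (fun i => pow_zero _)]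
      rw [hXprod]
      have : ∀ i ∈ Finset.univ, (C (t i) * X i : MvPolynomial (Fin n) ℝ)^(α i)
          = C ((t i)^(α i)) * (X i)^(α i) := fun i _ => by rw [mul_pow, C_pow]
      rw [Finset.prod_congr rfl this, Finset.prod_mul_distrib, ← map_prod, hc]
    have hkey : (∑ i, C (β i) * X i ^ (2*d) - C μ * monomial α 1 : MvPolynomial (Fin n) ℝ)
        = C (μ/c) * φ ((∑ i, C ((α i : ℝ)/(((2*d:ℕ)):ℝ)) * X i^(2*d)) - monomial α 1)
          + ∑ i, C (β i - (μ/c) * ((α i:ℝ)/(((2*d:ℕ)):ℝ) * (t i)^(2*d))) * X i^(2*d) := by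
      rw [map_sub, map_sum]
      have h1 : ∀ i ∈ Finset.univ, φ (C ((α i:ℝ)/(((2*d:ℕ)):ℝ)) * X i ^(2*d))
          = C ((α i:ℝ)/(((2*d:ℕ)):ℝ) * (t i)^(2*d)) * X i^(2*d) := fun i _ => hφdiag _ i
      rw [Finset.sum_congr rfl h1, hφmono, mul_sub, Finset.mul_sum, ← mul_assoc, ← C_mul,
        div_mul_cancel₀ μ hcpos.ne']
      rw [sub_add_eq_add_sub]
      congr 1
      rw [← Finset.sum_add_distrib]
      refine Finset.sum_congr rfl fun i _ => ?_
      rw [← mul_assoc, ← C_mul, ← add_mul, ← C_add]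
      congr 2
      ring
    rw [hkey]
    refine IsSumSq.add (sos_C_mul (div_nonneg hμ0 hcpos.le) ?_) (diag_sos d _ fun i => ?_)
    · exact sos_map' φ.toRingHom (QA_sos d hd α hα)
    · rcases eq_or_ne (α i) 0 with h | h
      · simp [h, hβ i]
      · have h1 : ((α i : ℕ) : ℝ) ≠ 0 := by
          have := Nat.pos_of_ne_zero h
          positivity
        have h2 : (α i:ℝ)/(((2*d:ℕ)):ℝ) * (t i)^(2*d) = β i := by
          rw [htpow i h]
          field_simp
        rw [h2]
        have h3 : μ/c ≤ 1 := (div_le_one hcpos).2 hμc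
        nlinarith [hβ i]

/-- Fidalgo–Kovacec: if `μ^{2d}·Π α_i^{α_i} ≤ (2d)^{2d}·Π β_i^{α_i}` then
`Σ β_i X_i^{2d} − μ·X^α` is a sum of squares.  (Convention `0^0 = 1`.) -/
theorem fidalgo_kovacec_sos {n d : ℕ} (hd : 1 ≤ d) (α : Fin n →₀ ℕ)
    (hα : ∑ i, α i = 2 * d) (β : Fin n → ℝ) (μ : ℝ)
    (hβ : ∀ i, 0 ≤ β i) (hμ : (∀ i, Even (α i)) → 0 ≤ μ)
    (hineq : μ ^ (2 * d) * ∏ i, (α i : ℝ) ^ (α i)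
      ≤ ((2 * d : ℕ) : ℝ) ^ (2 * d) * ∏ i, (β i) ^ (α i)) :
    IsSumSq (∑ i, C (β i) * X i ^ (2 * d) - C μ * monomial α (1 : ℝ)) := by
  rcases le_or_gt 0 μ with hμ0 | hμneg
  · exact main_nonneg d hd α hα β μ hβ hμ0 hineq
  · -- some exponent is odd; flip the sign of that variable
    have hodd : ∃ j, ¬ Even (α j) := by
      by_contra h
      push_neg at h
      exact absurd (hμ h) (not_le.2 hμneg)
    obtain ⟨j, hj⟩ := hodd
    have hjodd : Odd (α j) := Nat.not_even_iff_odd.1 hj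
    have hq := main_nonneg d hd α hα β (-μ) hβ (by linarith)
      (by rwa [Even.neg_pow (even_two_mul d)])
    set ψ : MvPolynomial (Fin n) ℝ →ₐ[ℝ] MvPolynomial (Fin n) ℝ :=
      aeval (fun i => if i = j then (- X j) else X i) with hψ
    have key := sos_map' ψ.toRingHom hq
    have hdiag : ∀ i ∈ Finset.univ, ψ (C (β i) * X i^(2*d)) = C (β i) * X i^(2*d) := by
      intro i _
      rw [hψ, map_mul, map_pow, aeval_C, aeval_X, algebraMap_eq]
      rcases eq_or_ne i j with rfl | hij
      · rw [if_pos rfl, Even.neg_pow (even_two_mul d)]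
      · rw [if_neg hij]
    have hXprod : (monomial α (1:ℝ) : MvPolynomial (Fin n) ℝ) = ∏ i, (X i)^(α i) := by
      rw [monomial_eq, map_one, one_mul, Finsupp.prod_fintype _ _ (fun i => pow_zero _)]
    have hmono : ψ (monomial α (1:ℝ)) = - monomial α 1 := by
      rw [hψ, aeval_monomial, map_one, one_mul,
        Finsupp.prod_fintype _ _ (fun i => pow_zero _)]
      have h1 : ∀ i ∈ Finset.univ, ((if i = j then (- X j) else X i : MvPolynomial (Fin n) ℝ))^(α i)
          = ((if i = j then (-1 : MvPolynomial (Fin n) ℝ) else 1) * X i)^(α i) := by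
        intro i _
        congr 1
        split_ifs with h
        · rw [h]; ring
        · rw [one_mul]
      rw [Finset.prod_congr rfl h1]
      have h2 : ∀ i ∈ Finset.univ, ((if i = j then (-1 : MvPolynomial (Fin n) ℝ) else 1) * X i)^(α i)
          = (if i = j then (-1 : MvPolynomial (Fin n) ℝ) else 1)^(α i) * (X i)^(α i) :=
        fun i _ => mul_pow _ _ _
      rw [Finset.prod_congr rfl h2, Finset.prod_mul_distrib]
      have h3 : ∏ i, ((if i = j then (-1 : MvPolynomial (Fin n) ℝ) else 1))^(α i) = -1 := by
        rw [Finset.prod_eq_single j (fun b _ hb => by rw [if_neg hb, one_pow])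
          (fun h => absurd (Finset.mem_univ j) h), if_pos rfl, Odd.neg_one_pow hjodd]
      rw [h3, hXprod, neg_one_mul]
    have hfin : ψ (∑ i, C (β i) * X i ^ (2*d) - C (-μ) * monomial α 1)
        = ∑ i, C (β i) * X i ^ (2*d) - C μ * monomial α 1 := by
      rw [map_sub, map_sum, Finset.sum_congr rfl hdiag, map_mul, hmono]
      rw [hψ, aeval_C, algebraMap_eq]
      rw [map_neg, mul_neg, neg_mul, neg_neg]
    rw [← hfin]
    exact key
end

section
/- Let p(X) = Σ_{i=1}^n β_i X_i^{2d} − μ·X^α where α ∈ ℕ^n, |α| = 2d, β_i ≥ 0 for all i, and μ ≥ 0 if all α_i are even. If p(x) ≥ 0 for all x ∈ ℝ^n, then μ^{2d}·Π_{i=1}^n α_i^{α_i} ≤ (2d)^{2d}·Π_{i=1}^n β_i^{α_i}. -/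
open MvPolynomial

/-- Fidalgo–Kovacec (converse direction): if the form
`Σ β_i X_i^{2d} − μ·X^α` is positive semidefinite on `ℝ^n`, then
`μ^{2d}·Π α_i^{α_i} ≤ (2d)^{2d}·Π β_i^{α_i}`.  (Convention `0^0 = 1`.) -/
theorem fidalgo_kovacec_psd_implies_ineq {n d : ℕ} (hd : 1 ≤ d) (α : Fin n →₀ ℕ)
    (hα : ∑ i, α i = 2 * d) (β : Fin n → ℝ) (μ : ℝ)
    (hβ : ∀ i, 0 ≤ β i) (hμ : (∀ i, Even (α i)) → 0 ≤ μ)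
    (hpsd : ∀ x : Fin n → ℝ,
      0 ≤ eval x (∑ i, C (β i) * X i ^ (2 * d) - C μ * monomial α (1 : ℝ))) :
    μ ^ (2 * d) * ∏ i, (α i : ℝ) ^ (α i)
      ≤ ((2 * d : ℕ) : ℝ) ^ (2 * d) * ∏ i, (β i) ^ (α i) := by
  have hd2 : (2 * d : ℕ) ≠ 0 := by omega
  have hd2R : (2 * d : ℝ) ≠ 0 := by positivity
  -- Step 1: pointwise inequality
  have key : ∀ x : Fin n → ℝ, μ * ∏ i, x i ^ α i ≤ ∑ i, β i * x i ^ (2*d) := by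
    intro x
    have h := hpsd x
    simp only [map_sub, map_sum, map_mul, eval_C, eval_X, map_pow, eval_monomial, one_mul] at h
    rw [Finsupp.prod_fintype _ _ (fun i => pow_zero (x i))] at h
    linarith
  -- Step 2: |μ| version for nonnegative points
  have key2 : ∀ x : Fin n → ℝ, (∀ i, 0 ≤ x i) →
      |μ| * ∏ i, x i ^ α i ≤ ∑ i, β i * x i ^ (2*d) := by
    intro x hx
    rcases le_or_gt 0 μ with hμ' | hμ'
    · rw [abs_of_nonneg hμ']; exact key x
    · have hodd : ¬ ∀ i, Even (α i) := fun h => absurd (hμ h) (not_le.mpr hμ')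
      push_neg at hodd
      obtain ⟨i0, hi0⟩ := hodd
      have hi0' : Odd (α i0) := Nat.not_even_iff_odd.mp hi0
      set y := Function.update x i0 (-(x i0)) with hy
      have hy2d : ∀ i, y i ^ (2*d) = x i ^ (2*d) := by
        intro i
        by_cases hi : i = i0
        · subst hi
          rw [hy, Function.update_self]
          exact (Even.neg_pow ⟨d, by ring⟩ _)
        · rw [hy, Function.update_of_ne hi]
      have hyprod : ∏ i, y i ^ α i = - ∏ i, x i ^ α i := by
        rw [← Finset.mul_prod_erase Finset.univ (fun i => y i ^ α i) (Finset.mem_univ i0),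
            ← Finset.mul_prod_erase Finset.univ (fun i => x i ^ α i) (Finset.mem_univ i0)]
        have h1 : y i0 ^ α i0 = -(x i0 ^ α i0) := by
          rw [hy, Function.update_self]; exact Odd.neg_pow hi0' _
        have h2 : ∏ i ∈ Finset.univ.erase i0, y i ^ α i
            = ∏ i ∈ Finset.univ.erase i0, x i ^ α i := by
          refine Finset.prod_congr rfl fun i hi => ?_
          rw [hy, Function.update_of_ne (Finset.ne_of_mem_erase hi)]
        rw [h1, h2]; ring
      rw [abs_of_neg hμ']
      calc -μ * ∏ i, x i ^ α i = μ * ∏ i, y i ^ α i := by rw [hyprod]; ring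
        _ ≤ ∑ i, β i * y i ^ (2*d) := key y
        _ = ∑ i, β i * x i ^ (2*d) := by
            refine Finset.sum_congr rfl fun i _ => by rw [hy2d i]
  by_cases hz : ∃ i, α i ≠ 0 ∧ β i = 0
  · -- degenerate case: μ = 0
    obtain ⟨i0, hα0, hβ0⟩ := hz
    set C := ∑ j, β j with hC
    have hC0 : 0 ≤ C := Finset.sum_nonneg fun j _ => hβ j
    have hbound : ∀ T : ℝ, 1 ≤ T → |μ| * T ≤ C := by
      intro T hT
      have hT0 : 0 ≤ T := le_trans zero_le_one hT
      set x : Fin n → ℝ := fun j => if j = i0 then T else 1 with hxdef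
      have hx : ∀ j, 0 ≤ x j := by
        intro j; rw [hxdef]; dsimp only; split <;> [exact hT0; exact zero_le_one]
      have h := key2 x hx
      have hp : ∏ i, x i ^ α i = T ^ α i0 := by
        rw [← Finset.mul_prod_erase Finset.univ (fun i => x i ^ α i) (Finset.mem_univ i0)]
        have : ∏ i ∈ Finset.univ.erase i0, x i ^ α i = 1 := by
          refine Finset.prod_eq_one fun i hi => ?_
          rw [hxdef]; simp [Finset.ne_of_mem_erase hi]
        rw [this, hxdef]; simp
      have hs : ∑ i, β i * x i ^ (2*d) ≤ C := by
        rw [hC]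
        refine Finset.sum_le_sum fun i _ => ?_
        by_cases hi : i = i0
        · subst hi; rw [hβ0]; simp
        · rw [hxdef]; simp [hi]
      have hTp : T ≤ T ^ α i0 := le_self_pow₀ hT hα0
      have : |μ| * T ≤ |μ| * T ^ α i0 := by
        exact mul_le_mul_of_nonneg_left hTp (abs_nonneg μ)
      calc |μ| * T ≤ |μ| * T ^ α i0 := this
        _ = |μ| * ∏ i, x i ^ α i := by rw [hp]
        _ ≤ ∑ i, β i * x i ^ (2*d) := h
        _ ≤ C := hs
    have hμ0 : μ = 0 := by
      by_contra hμne
      have habs : 0 < |μ| := abs_pos.mpr hμne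
      have hT1 : (1:ℝ) ≤ max 1 ((C+1)/|μ|) := le_max_left _ _
      have h := hbound _ hT1
      have : C + 1 ≤ |μ| * max 1 ((C+1)/|μ|) := by
        calc C + 1 = |μ| * ((C+1)/|μ|) := by field_simp
          _ ≤ |μ| * max 1 ((C+1)/|μ|) :=
            mul_le_mul_of_nonneg_left (le_max_right _ _) (abs_nonneg μ)
      linarith
    rw [hμ0]
    rw [zero_pow hd2, zero_mul]
    have : (0:ℝ) ≤ ∏ i, (β i) ^ (α i) :=
      Finset.prod_nonneg fun i _ => pow_nonneg (hβ i) _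
    positivity
  · -- main case: β i > 0 whenever α i ≠ 0
    push_neg at hz
    have hβpos : ∀ i, α i ≠ 0 → 0 < β i := fun i hi => (hβ i).lt_of_ne (Ne.symm (hz i hi))
    set t : Fin n → ℝ := fun i =>
      if α i = 0 then 0 else ((α i : ℝ) / (2*d*β i)) ^ ((1:ℝ)/(2*d)) with htdef
    have ht0 : ∀ i, 0 ≤ t i := by
      intro i; rw [htdef]; dsimp only; split
      · exact le_refl 0
      · exact Real.rpow_nonneg (div_nonneg (Nat.cast_nonneg _)
          (mul_nonneg (by positivity) (hβ i))) _
    have ht2d : ∀ i, α i ≠ 0 → t i ^ (2*d) = (α i : ℝ) / (2*d*β i) := by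
      intro i hi
      rw [htdef]; dsimp only; rw [if_neg hi]
      rw [← Real.rpow_natCast (((α i : ℝ) / (2*d*β i)) ^ ((1:ℝ)/(2*d))) (2*d),
          ← Real.rpow_mul (div_nonneg (Nat.cast_nonneg _)
            (mul_nonneg (by positivity) (hβ i)))]
      push_cast
      rw [one_div, inv_mul_cancel₀ hd2R, Real.rpow_one]
    have h1 : ∀ i, β i * t i ^ (2*d) = (α i : ℝ) / (2*d) := by
      intro i
      by_cases hi : α i = 0
      · rw [htdef]; dsimp only; rw [if_pos hi, hi]
        rw [zero_pow hd2]; simp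
      · rw [ht2d i hi]
        have hβi := hβpos i hi
        field_simp
    have hsum : ∑ i, β i * t i ^ (2*d) = 1 := by
      have : ∑ i, β i * t i ^ (2*d) = (∑ i, (α i : ℝ)) / (2*d) := by
        rw [Finset.sum_div]
        exact Finset.sum_congr rfl fun i _ => h1 i
      rw [this]
      have : (∑ i, (α i : ℝ)) = (2*d : ℝ) := by
        rw [← Nat.cast_sum, hα]; push_cast; ring
      rw [this, div_self hd2R]
    have hkey := key2 t ht0
    rw [hsum] at hkey
    set P := ∏ i, t i ^ α i with hP
    have hP0 : 0 ≤ P := Finset.prod_nonneg fun i _ => pow_nonneg (ht0 i) _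
    have hpow : (|μ| * P) ^ (2*d) ≤ 1 := by
      calc (|μ| * P) ^ (2*d) ≤ 1 ^ (2*d) :=
        pow_le_pow_left₀ (mul_nonneg (abs_nonneg μ) hP0) hkey _
      _ = 1 := one_pow _
    have hP2d : P ^ (2*d) = (∏ i, (α i : ℝ) ^ (α i)) / ∏ i, (2*d*β i) ^ (α i) := by
      rw [hP, ← Finset.prod_pow]
      rw [← Finset.prod_div_distrib]
      refine Finset.prod_congr rfl fun i _ => ?_
      by_cases hi : α i = 0
      · rw [hi]; simp
      · rw [← pow_mul, mul_comm (α i) (2*d), pow_mul, ht2d i hi, div_pow]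
    have hB : ∏ i, ((2*d : ℝ)*β i) ^ (α i)
        = ((2 * d : ℕ) : ℝ) ^ (2 * d) * ∏ i, (β i) ^ (α i) := by
      have e1 : ∏ i, ((2*d : ℝ)*β i) ^ (α i)
          = (∏ i, (2*d : ℝ) ^ (α i)) * ∏ i, (β i) ^ (α i) := by
        rw [← Finset.prod_mul_distrib]
        exact Finset.prod_congr rfl fun i _ => mul_pow _ _ _
      rw [e1, Finset.prod_pow_eq_pow_sum, hα]
      push_cast; ring_nf
    have hBpos : 0 < ∏ i, ((2*d : ℝ)*β i) ^ (α i) := by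
      refine Finset.prod_pos fun i _ => ?_
      by_cases hi : α i = 0
      · rw [hi, pow_zero]; exact one_pos
      · exact pow_pos (by have := hβpos i hi; positivity) _
    have hfin : |μ| ^ (2*d) * ((∏ i, (α i : ℝ) ^ (α i)) / ∏ i, ((2*d : ℝ)*β i) ^ (α i)) ≤ 1 := by
      rw [← hP2d, ← mul_pow]; exact hpow
    rw [← mul_div_assoc] at hfin
    rw [div_le_one hBpos] at hfin
    rw [← Even.pow_abs ⟨d, by ring⟩ μ, ← hB]
    exact hfin
end

section
/- A polynomial f ∈ ℝ[X_1,...,X_n] of even degree 2d is a sum of squares if and only if its homogenization f̄(X,Y) = Y^{2d}·f(X_1/Y,...,X_n/Y) is a sum of squares in ℝ[X_1,...,X_n,Y]. -/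
open MvPolynomial

/-- The homogenization `f̄ = Σ_α f_α X^α Y^{2d−|α|}` of `f`, where the
homogenizing variable `Y` is the variable of index `0` in `Fin (n+1)`. -/
noncomputable def homogenize {n : ℕ} (d : ℕ) (f : MvPolynomial (Fin n) ℝ) :
    MvPolynomial (Fin (n + 1)) ℝ :=
  ∑ α ∈ f.support,
    monomial (Finsupp.cons (2 * d - ∑ i, α i) α) (f.coeff α)

namespace SosHomAux

variable {n : ℕ}

/-- degree of a finsupp over a fintype is the sum over univ -/
lemma degree_eq_univ_sum {σ : Type*} [Fintype σ] (d : σ →₀ ℕ) :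
    d.degree = ∑ i, d i := by
  rw [Finsupp.degree]
  exact Finset.sum_subset (Finset.subset_univ _)
    (fun i _ hi => Finsupp.notMem_support_iff.mp hi)

/-- the exponent map for homogenization -/
noncomputable def e (m : ℕ) (α : Fin n →₀ ℕ) : Fin (n + 1) →₀ ℕ :=
  Finsupp.cons (m - ∑ i, α i) α

lemma tail_e (m : ℕ) (α : Fin n →₀ ℕ) : Finsupp.tail (e m α) = α :=
  Finsupp.tail_cons _ _

lemma degree_e {m : ℕ} {α : Fin n →₀ ℕ} (h : ∑ i, α i ≤ m) :
    (e m α).degree = m := by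
  rw [degree_eq_univ_sum, Fin.sum_univ_succ]
  simp only [e, Finsupp.cons_zero, Finsupp.cons_succ]
  omega

/-- the general homogenization to degree m -/
noncomputable def homogQ (m : ℕ) (g : MvPolynomial (Fin n) ℝ) :
    MvPolynomial (Fin (n + 1)) ℝ :=
  ∑ α ∈ g.support, monomial (e m α) (g.coeff α)

lemma homogenize_eq (d : ℕ) (f : MvPolynomial (Fin n) ℝ) :
    homogenize d f = homogQ (2 * d) f := rfl

lemma coeff_homogQ (m : ℕ) (g : MvPolynomial (Fin n) ℝ) (β : Fin (n + 1) →₀ ℕ) :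
    coeff β (homogQ m g) =
      if β = e m (Finsupp.tail β) then coeff (Finsupp.tail β) g else 0 := by
  rw [homogQ, coeff_sum]
  by_cases h : β = e m (Finsupp.tail β)
  · rw [if_pos h]
    have key : ∀ α ∈ g.support, coeff β (monomial (e m α) (coeff α g)) =
        if α = Finsupp.tail β then coeff α g else 0 := by
      intro α _
      rw [coeff_monomial]
      congr 1
      apply propext
      constructor
      · intro hh; rw [← hh, tail_e]
      · intro hh; rw [hh, ← h]
    rw [Finset.sum_congr rfl key, Finset.sum_ite_eq' g.support (Finsupp.tail β)
      (fun α => coeff α g)]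
    split
    · rfl
    · next hh => exact (MvPolynomial.notMem_support_iff.mp hh).symm
  · rw [if_neg h]
    apply Finset.sum_eq_zero
    intro α _
    rw [coeff_monomial, if_neg]
    intro hh
    exact h (by rw [← hh, tail_e])

lemma homogQ_add (m : ℕ) (g h : MvPolynomial (Fin n) ℝ) :
    homogQ m (g + h) = homogQ m g + homogQ m h := by
  ext β
  simp only [coeff_homogQ, coeff_add]
  split <;> simp

lemma homogQ_monomial (m : ℕ) (α : Fin n →₀ ℕ) (c : ℝ) :
    homogQ m (monomial α c) = monomial (e m α) c := by
  by_cases hc : c = 0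
  · simp [homogQ, hc]
  · rw [homogQ, support_monomial, if_neg hc, Finset.sum_singleton, coeff_monomial,
      if_pos rfl]

/-- homogQ as an additive monoid hom -/
noncomputable def homogM (m : ℕ) : MvPolynomial (Fin n) ℝ →+ MvPolynomial (Fin (n + 1)) ℝ :=
  AddMonoidHom.mk' (homogQ m) (homogQ_add m)

/-- dehomogenization: substitute Y := 1 -/
noncomputable def dehom : MvPolynomial (Fin (n + 1)) ℝ →ₐ[ℝ] MvPolynomial (Fin n) ℝ :=
  aeval (Fin.cases 1 X)

lemma dehom_monomial (β : Fin (n + 1) →₀ ℕ) (c : ℝ) :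
    dehom (monomial β c) = monomial (Finsupp.tail β) c := by
  rw [dehom, aeval_monomial, monomial_eq, Finsupp.prod_fintype _ _ (by simp),
    Finsupp.prod_fintype _ _ (by simp), Fin.prod_univ_succ]
  simp [Finsupp.tail_apply, algebraMap_eq]

lemma dehom_homogQ (m : ℕ) (g : MvPolynomial (Fin n) ℝ) :
    dehom (homogQ m g) = g := by
  rw [homogQ, map_sum]
  rw [Finset.sum_congr rfl (fun α _ => by rw [dehom_monomial, tail_e])]
  exact support_sum_monomial_coeff g

lemma isHomogeneous_homogQ {m : ℕ} {g : MvPolynomial (Fin n) ℝ}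
    (h : g.totalDegree ≤ m) : (homogQ m g).IsHomogeneous m := by
  apply IsHomogeneous.sum
  intro α hα
  apply isHomogeneous_monomial
  apply degree_e
  calc ∑ i, α i = α.degree := (degree_eq_univ_sum α).symm
    _ ≤ g.totalDegree := le_totalDegree hα
    _ ≤ m := h

lemma homogQ_dehom {m : ℕ} {p : MvPolynomial (Fin (n + 1)) ℝ}
    (hp : p.IsHomogeneous m) : homogQ m (dehom p) = p := by
  conv_lhs => rw [p.as_sum, map_sum]
  rw [show (homogQ m : MvPolynomial (Fin n) ℝ → _) = homogM (n := n) m from rfl, map_sum]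
  have key : ∀ β ∈ p.support,
      (homogM (n := n) m) (dehom (monomial β (coeff β p))) = monomial β (coeff β p) := by
    intro β hβ
    rw [show (homogM (n := n) m) (dehom (monomial β (coeff β p)))
        = homogQ m (dehom (monomial β (coeff β p))) from rfl,
      dehom_monomial, homogQ_monomial]
    congr 1
    have hd : β.degree = m := by
      rw [Finsupp.degree_eq_weight_one]; exact hp (MvPolynomial.mem_support_iff.mp hβ)
    have hd2 : β 0 + ∑ i, Finsupp.tail β i = m := by
      rw [← hd, degree_eq_univ_sum, Fin.sum_univ_succ]
      simp [Finsupp.tail_apply]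
    rw [e, show m - ∑ i, Finsupp.tail β i = β 0 by omega, Finsupp.cons_tail]
  rw [Finset.sum_congr rfl key, ← p.as_sum]


lemma dehom_injOn {m : ℕ} {p q : MvPolynomial (Fin (n + 1)) ℝ}
    (hp : p.IsHomogeneous m) (hq : q.IsHomogeneous m) (h : dehom p = dehom q) :
    p = q := by
  rw [← homogQ_dehom hp, ← homogQ_dehom hq, h]

/-- sums of squares are preserved by ring homomorphisms -/
lemma isSumSq_map {R S : Type*} [CommRing R] [CommRing S] (φ : R →+* S) {a : R}
    (h : IsSumSq a) : IsSumSq (φ a) := by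
  induction h with
  | zero => rw [map_zero]; exact IsSumSq.zero
  | sq_add x _ ih => rw [map_add, map_mul]; exact IsSumSq.sq_add _ ih

lemma isSumSq_iff_multiset {R : Type*} [CommRing R] (a : R) :
    IsSumSq a ↔ ∃ s : Multiset R, a = (s.map fun x => x * x).sum := by
  constructor
  · intro h
    induction h with
    | zero => exact ⟨0, by simp⟩
    | sq_add x _ ih =>
      obtain ⟨s, hs⟩ := ih
      exact ⟨x ::ₘ s, by simp [hs]⟩
  · rintro ⟨s, rfl⟩
    induction s using Multiset.induction with
    | empty => simpa using IsSumSq.zero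
    | cons a s ih => simpa using IsSumSq.sq_add a ih

/-- a sum of squares of reals is zero iff each is zero -/
lemma real_squares_zero (s : Multiset ℝ) (h : (s.map fun x => x * x).sum = 0) :
    ∀ x ∈ s, x = 0 := by
  induction s using Multiset.induction with
  | empty => simp
  | cons a s ih =>
    rw [Multiset.map_cons, Multiset.sum_cons] at h
    have h1 : (0:ℝ) ≤ a * a := mul_self_nonneg a
    have h2 : (0:ℝ) ≤ (s.map fun x => x * x).sum :=
      Multiset.sum_nonneg (by
        intro x hx
        obtain ⟨y, _, rfl⟩ := Multiset.mem_map.mp hx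
        exact mul_self_nonneg y)
    have ha : a = 0 := by nlinarith
    have hs : (s.map fun x => x * x).sum = 0 := by linarith
    intro x hx
    rcases Multiset.mem_cons.mp hx with rfl | hx
    · exact ha
    · exact ih hs x hx

/-- a sum of squares of real polynomials is zero iff each is zero -/
lemma poly_squares_zero (s : Multiset (MvPolynomial (Fin n) ℝ))
    (h : (s.map fun x => x * x).sum = 0) : ∀ x ∈ s, x = 0 := by
  intro x hx
  apply MvPolynomial.funext
  intro v
  have hv : ((s.map fun x => x * x).map (eval v)).sum = 0 := by
    rw [← map_multiset_sum, h, map_zero]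
  rw [Multiset.map_map] at hv
  have hv' : (((s.map (eval v)).map fun y => y * y)).sum = 0 := by
    rw [Multiset.map_map]
    convert hv using 2
    ext y
    simp
  have := real_squares_zero _ hv' (eval v x) (Multiset.mem_map_of_mem _ hx)
  simpa using this

/-- top homogeneous component of a nonzero polynomial is nonzero -/
lemma top_component_ne_zero {p : MvPolynomial (Fin n) ℝ} (hp : p ≠ 0) :
    homogeneousComponent p.totalDegree p ≠ 0 := by
  have hsupp : p.support.Nonempty := MvPolynomial.support_nonempty.mpr hp
  obtain ⟨β, hβ, hdeg⟩ := Finset.exists_mem_eq_sup _ hsupp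
    (fun d : Fin n →₀ ℕ => d.sum fun _ e => e)
  intro h0
  have hc : coeff β (homogeneousComponent p.totalDegree p) = coeff β p := by
    rw [coeff_homogeneousComponent, if_pos]
    rw [MvPolynomial.totalDegree, hdeg]
    rfl
  rw [h0, coeff_zero] at hc
  exact MvPolynomial.mem_support_iff.mp hβ hc.symm

/-- component of a square at the top -/
lemma component_sq {m : ℕ} {y : MvPolynomial (Fin n) ℝ} (hy : y.totalDegree ≤ m) :
    homogeneousComponent (2 * m) (y * y) =
      homogeneousComponent m y * homogeneousComponent m y := by
  set c := homogeneousComponent m y with hc_def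
  have hc : c.IsHomogeneous m := homogeneousComponent_isHomogeneous m y
  set r := y - c with hr_def
  have hcc : homogeneousComponent m c = c :=
    (homogeneousComponent_of_mem (homogeneousComponent_mem m y)).trans (if_pos rfl)
  have hr_comp : homogeneousComponent m r = 0 := by
    rw [hr_def, map_sub, hcc, sub_self]
  have hr_le : r.totalDegree ≤ m := by
    refine le_trans (totalDegree_sub y c) ?_
    exact max_le hy hc.totalDegree_le
  have hr_cases : r = 0 ∨ r.totalDegree < m := by
    rcases eq_or_ne r 0 with h | h
    · exact Or.inl h
    · right
      rcases lt_or_eq_of_le hr_le with h' | h'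
      · exact h'
      · exfalso; exact top_component_ne_zero h (h' ▸ hr_comp)
  have hy_eq : y = c + r := by rw [hr_def]; ring
  have hcchom : (c * c).IsHomogeneous (2 * m) := by
    have := hc.mul hc; rwa [two_mul]
  have hcompcc : homogeneousComponent (2 * m) (c * c) = c * c :=
    (homogeneousComponent_of_mem hcchom).trans (if_pos rfl)
  rcases hr_cases with h0 | hrlt
  · rw [hy_eq, h0, add_zero, hcompcc]
  · have hm : 0 < m := Nat.pos_of_ne_zero (by rintro rfl; omega)
    have h1 : homogeneousComponent (2 * m) (c * r) = 0 := by
      apply homogeneousComponent_eq_zero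
      calc (c * r).totalDegree ≤ c.totalDegree + r.totalDegree := totalDegree_mul c r
        _ ≤ m + r.totalDegree := by gcongr; exact hc.totalDegree_le
        _ < 2 * m := by omega
    have h2 : homogeneousComponent (2 * m) (r * c) = 0 := by
      apply homogeneousComponent_eq_zero
      calc (r * c).totalDegree ≤ r.totalDegree + c.totalDegree := totalDegree_mul r c
        _ ≤ r.totalDegree + m := by gcongr; exact hc.totalDegree_le
        _ < 2 * m := by omega
    have h3 : homogeneousComponent (2 * m) (r * r) = 0 := by
      apply homogeneousComponent_eq_zero
      calc (r * r).totalDegree ≤ r.totalDegree + r.totalDegree := totalDegree_mul r r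
        _ < 2 * m := by omega
    have : y * y = c * c + (c * r + r * c + r * r) := by rw [hy_eq]; ring
    rw [this, map_add, map_add, map_add, hcompcc, h1, h2, h3]
    ring

/-- sup of a nonzero multiset of naturals is attained -/
lemma multiset_sup_mem (s : Multiset ℕ) (hs : s ≠ 0) : s.sup ∈ s := by
  induction s using Multiset.induction with
  | empty => exact absurd rfl hs
  | cons a t ih =>
    rw [Multiset.sup_cons]
    rcases eq_or_ne t 0 with rfl | ht
    · simp
    · rcases le_total a t.sup with h | h
      · rw [sup_eq_right.mpr h]
        exact Multiset.mem_cons_of_mem (ih ht)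
      · rw [sup_eq_left.mpr h]
        exact Multiset.mem_cons_self a t

/-- degree bound for summands in a sum of squares -/
lemma deg_bound {d : ℕ} {s : Multiset (MvPolynomial (Fin n) ℝ)}
    {f : MvPolynomial (Fin n) ℝ} (hsum : (s.map fun x => x * x).sum = f)
    (hdeg : f.totalDegree = 2 * d) : ∀ x ∈ s, x.totalDegree ≤ d := by
  intro x hx
  by_contra hxd
  push_neg at hxd
  set m := (s.map MvPolynomial.totalDegree).sup with hm_def
  have hxm : x.totalDegree ≤ m := Multiset.le_sup (Multiset.mem_map_of_mem _ hx)
  have hdm : d < m := lt_of_lt_of_le hxd hxm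
  have hall : ∀ y ∈ s, y.totalDegree ≤ m := fun y hy =>
    Multiset.le_sup (Multiset.mem_map_of_mem _ hy)
  -- the (2m)-component of f is the sum of squares of the m-components
  have hcomp : homogeneousComponent (2 * m) f =
      ((s.map (homogeneousComponent m)).map fun z => z * z).sum := by
    rw [← hsum, map_multiset_sum, Multiset.map_map, Multiset.map_map]
    congr 1
    apply Multiset.map_congr rfl
    intro y hy
    exact component_sq (hall y hy)
  have hzero : homogeneousComponent (2 * m) f = 0 :=
    homogeneousComponent_eq_zero (2 * m) f (by omega)
  rw [hzero] at hcomp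
  have hallzero : ∀ z ∈ s.map (homogeneousComponent m), z = 0 :=
    poly_squares_zero _ hcomp.symm
  -- get an element attaining the max degree
  have hsne : s.map MvPolynomial.totalDegree ≠ 0 := by
    intro h0
    rw [Multiset.map_eq_zero] at h0
    subst h0
    exact absurd hx (Multiset.notMem_zero x)
  obtain ⟨x₁, hx₁, hx₁deg⟩ := Multiset.mem_map.mp (multiset_sup_mem _ hsne)
  have hx₁ne : x₁ ≠ 0 := by
    intro h0
    rw [h0, totalDegree_zero] at hx₁deg
    omega
  have := top_component_ne_zero hx₁ne
  rw [hx₁deg] at this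
  exact this (hallzero _ (Multiset.mem_map_of_mem _ hx₁))

end SosHomAux

open SosHomAux in
/-- A nonzero polynomial `f` of even degree `2d` is a sum of squares iff its
homogenization is a sum of squares in `ℝ[X_1,…,X_n,Y]`. -/
theorem sos_iff_homogenize_sos {n d : ℕ} (f : MvPolynomial (Fin n) ℝ)
    (hf : f ≠ 0) (hdeg : f.totalDegree = 2 * d) :
    IsSumSq f ↔ IsSumSq (homogenize d f) := by
  constructor
  · intro h
    obtain ⟨s, hs⟩ := (isSumSq_iff_multiset f).mp h
    have hdb : ∀ x ∈ s, x.totalDegree ≤ d := deg_bound hs.symm hdeg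
    set G := ((s.map (homogQ d)).map fun y => y * y).sum with hG
    have hGsos : IsSumSq G := (isSumSq_iff_multiset G).mpr ⟨s.map (homogQ d), rfl⟩
    have hGhom : G.IsHomogeneous (2 * d) := by
      rw [← mem_homogeneousSubmodule]
      apply multiset_sum_mem
      intro z hz
      obtain ⟨y, hy, rfl⟩ := Multiset.mem_map.mp hz
      obtain ⟨x, hx, rfl⟩ := Multiset.mem_map.mp hy
      rw [mem_homogeneousSubmodule, two_mul]
      exact (isHomogeneous_homogQ (hdb x hx)).mul (isHomogeneous_homogQ (hdb x hx))
    have hfhom : (homogenize d f).IsHomogeneous (2 * d) := by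
      rw [homogenize_eq]; exact isHomogeneous_homogQ (le_of_eq hdeg)
    have hde : dehom (homogenize d f) = dehom G := by
      rw [homogenize_eq, dehom_homogQ, hG, map_multiset_sum, Multiset.map_map,
        Multiset.map_map, hs]
      congr 1
      apply Multiset.map_congr rfl
      intro x hx
      simp only [Function.comp_apply, map_mul, dehom_homogQ]
    rw [dehom_injOn hfhom hGhom hde]
    exact hGsos
  · intro h
    have := isSumSq_map (dehom (n := n)).toRingHom h
    rwa [AlgHom.toRingHom_eq_coe, RingHom.coe_coe, homogenize_eq, dehom_homogQ] at this
end
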